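/- Let a, c > 0, b ∈ (0,1], m ∈ ℕ, and let (X_i)_{i≥1} be independent, nonnegative, square-integrable random variables on a probability space (Ω, 𝓕, P) such that Σ_i Var(X_i) < ∞ and such that for every n ≥ m, the set {i ∈ {1,…,n} : E[X_i] ≥ 1/(c·i)} has at least b·n elements. Then Σ_{i≤n} X_i → ∞ almost surely. -/

import Mathlib

open MeasureTheory Filter

/-- Abstraction of Lemma 1: independent nonnegative square-integrable random variables
with summable variances, such that for all large `n` at least `b * n` of the indices
`i ∈ {1, …, n}` satisfy `E[X i] ≥ 1 / (c * i)`, have almost surely divergent partial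
sums. -/
theorem partial_sums_tendsto_atTop_ae_of_pos_density_mean_lower_bound
    {Ω : Type*} [MeasurableSpace Ω] (P : Measure Ω) [IsProbabilityMeasure P]
    (a c : ℝ) (ha : 0 < a) (hc : 0 < c)
    (b : ℝ) (hb : b ∈ Set.Ioc (0 : ℝ) 1) (m : ℕ)
    (X : ℕ → Ω → ℝ)
    (hmeas : ∀ i, Measurable (X i))
    (hindep : ProbabilityTheory.iIndepFun X P)
    (hnonneg : ∀ i ω, 0 ≤ X i ω)
    (hL2 : ∀ i, MemLp (X i) 2 P)
    (hvar : Summable fun i => ProbabilityTheory.variance (X i) P)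
    (hdens : ∀ n ≥ m,
      b * n ≤ (((Finset.Icc 1 n).filter
        (fun i => 1 / (c * i) ≤ ∫ ω, X i ω ∂P)).card : ℝ)) :
    ∀ᵐ ω ∂P, Tendsto (fun n => ∑ i ∈ Finset.Icc 1 n, X i ω) atTop atTop := by
  classical
  obtain ⟨hb0, hb1⟩ := hb
  set μn : ℕ → ℝ := fun n => ∑ i ∈ Finset.Icc 1 n, ∫ ω, X i ω ∂P with hμn
  have hEnonneg : ∀ i, 0 ≤ ∫ ω, X i ω ∂P := fun i => integral_nonneg (hnonneg i)
  -- Step: means can always be increased by b/(2c)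
  have hstep : ∀ n : ℕ, ∃ N : ℕ, μn n + b / (2 * c) ≤ μn N := by
    intro n
    obtain ⟨N, hNm, hN1, hNb⟩ : ∃ N : ℕ, m ≤ N ∧ n + 1 ≤ N ∧ ((n : ℝ) + 1) ≤ b * N / 2 := by
      refine ⟨max m (max (n + 1) ⌈2 * ((n : ℝ) + 1) / b⌉₊), le_max_left _ _,
        (le_max_left _ _).trans (le_max_right _ _), ?_⟩
      have h1 : (⌈2 * ((n : ℝ) + 1) / b⌉₊ : ℝ) ≤ (max m (max (n + 1) ⌈2 * ((n : ℝ) + 1) / b⌉₊) : ℕ) := by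
        exact_mod_cast Nat.cast_le.mpr ((le_max_right _ _).trans' (le_max_right _ _))
      have h2 : 2 * ((n : ℝ) + 1) / b ≤ (max m (max (n + 1) ⌈2 * ((n : ℝ) + 1) / b⌉₊) : ℕ) :=
        (Nat.le_ceil _).trans h1
      rw [div_le_iff₀ hb0] at h2
      nlinarith
    have hNpos : (0 : ℝ) < N := by exact_mod_cast Nat.lt_of_lt_of_le n.succ_pos hN1
    set G := (Finset.Icc 1 N).filter (fun i => 1 / (c * i) ≤ ∫ ω, X i ω ∂P) with hG
    have hcard : b * N ≤ (G.card : ℝ) := hdens N hNm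
    set T := G \ Finset.Icc 1 n with hT
    have hTcard : b * N / 2 ≤ (T.card : ℝ) := by
      have h1 : G.card ≤ T.card + (Finset.Icc 1 n).card := Finset.card_le_card_sdiff_add_card
      have h2 : ((Finset.Icc 1 n).card : ℝ) = n := by simp [Nat.card_Icc]
      have h3 : (G.card : ℝ) ≤ (T.card : ℝ) + n := by
        rw [← h2]; exact_mod_cast h1
      linarith
    have hTsub : T ⊆ Finset.Icc 1 N := (Finset.sdiff_subset).trans (Finset.filter_subset _ _)
    have hTsum : b / (2 * c) ≤ ∑ i ∈ T, ∫ ω, X i ω ∂P := by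
      have h1 : ∀ i ∈ T, 1 / (c * N) ≤ ∫ ω, X i ω ∂P := by
        intro i hi
        have hiG : i ∈ G := (Finset.mem_sdiff.mp hi).1
        have hile : i ≤ N := (Finset.mem_Icc.mp (Finset.mem_filter.mp hiG).1).2
        have hi1 : 1 ≤ i := (Finset.mem_Icc.mp (Finset.mem_filter.mp hiG).1).1
        have hipos : (0 : ℝ) < c * i := by
          have : (1:ℝ) ≤ i := by exact_mod_cast hi1
          positivity
        refine le_trans ?_ (Finset.mem_filter.mp hiG).2
        apply one_div_le_one_div_of_le hipos
        have : (i : ℝ) ≤ N := by exact_mod_cast hile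
        nlinarith
      have h2 : (T.card : ℝ) * (1 / (c * N)) ≤ ∑ i ∈ T, ∫ ω, X i ω ∂P := by
        have := Finset.card_nsmul_le_sum T (fun i => ∫ ω, X i ω ∂P) (1 / (c * N)) h1
        simpa [nsmul_eq_mul] using this
      refine le_trans ?_ h2
      have hbd : b / (2 * c) = (b * N / 2) * (1 / (c * N)) := by
        field_simp
      rw [hbd]
      apply mul_le_mul_of_nonneg_right hTcard
      positivity
    refine ⟨N, ?_⟩
    have hdisj : Disjoint (Finset.Icc 1 n) T := by
      simp [hT, Finset.disjoint_sdiff]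
    have hsub : Finset.Icc 1 n ∪ T ⊆ Finset.Icc 1 N := by
      refine Finset.union_subset ?_ hTsub
      exact Finset.Icc_subset_Icc_right (by omega)
    have h4 : μn n + ∑ i ∈ T, ∫ ω, X i ω ∂P ≤ μn N := by
      rw [hμn]
      calc (∑ i ∈ Finset.Icc 1 n, ∫ ω, X i ω ∂P) + ∑ i ∈ T, ∫ ω, X i ω ∂P
          = ∑ i ∈ Finset.Icc 1 n ∪ T, ∫ ω, X i ω ∂P := (Finset.sum_union hdisj).symm
        _ ≤ ∑ i ∈ Finset.Icc 1 N, ∫ ω, X i ω ∂P :=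
            Finset.sum_le_sum_of_subset_of_nonneg hsub (fun i _ _ => hEnonneg i)
    linarith
  -- means are unbounded
  have hμ_unbdd : ∀ L : ℝ, ∃ n, L ≤ μn n := by
    have hδ : 0 < b / (2 * c) := by positivity
    have key : ∀ k : ℕ, ∃ n, (k : ℝ) * (b / (2 * c)) ≤ μn n := by
      intro k
      induction k with
      | zero => exact ⟨0, by simp [hμn]⟩
      | succ k ih =>
        obtain ⟨n, hn⟩ := ih
        obtain ⟨N, hN⟩ := hstep n
        exact ⟨N, by push_cast; nlinarith⟩
    intro L
    obtain ⟨k, hk⟩ := exists_nat_ge (L / (b / (2 * c)))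
    obtain ⟨n, hn⟩ := key k
    refine ⟨n, le_trans ?_ hn⟩
    rw [div_le_iff₀ hδ] at hk
    linarith
  -- variance bound
  set V : ℝ := ∑' i, ProbabilityTheory.variance (X i) P with hV
  have hvarS : ∀ n : ℕ, ProbabilityTheory.variance (∑ i ∈ Finset.Icc 1 n, X i) P ≤ V := by
    intro n
    rw [ProbabilityTheory.IndepFun.variance_sum (fun i _ => hL2 i)
      (fun i _ j _ hij => hindep.indepFun hij)]
    exact Summable.sum_le_tsum _ (fun i _ => ProbabilityTheory.variance_nonneg _ _) hvar
  -- main a.e. statement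
  have hae : ∀ᵐ ω ∂P, ∀ M : ℕ, ∃ n, (M : ℝ) < ∑ i ∈ Finset.Icc 1 n, X i ω := by
    rw [ae_all_iff]
    intro M
    rw [ae_iff]
    push_neg
    set A : Set Ω := {ω | ∀ n, ∑ i ∈ Finset.Icc 1 n, X i ω ≤ M} with hA
    have key : ∀ k : ℕ, P A ≤ ENNReal.ofReal (V / ((k : ℝ) + 1) ^ 2) := by
      intro k
      obtain ⟨n, hn⟩ := hμ_unbdd ((M : ℝ) + (k + 1))
      have hμeq : ∫ ω, (∑ i ∈ Finset.Icc 1 n, X i) ω ∂P = μn n := by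
        simp only [Finset.sum_apply]
        rw [hμn]
        exact integral_finset_sum _ (fun i _ => (hL2 i).integrable one_le_two)
      have hsub : A ⊆ {ω | ((k : ℝ) + 1) ≤ |(∑ i ∈ Finset.Icc 1 n, X i) ω - ∫ x, (∑ i ∈ Finset.Icc 1 n, X i) x ∂P|} := by
        intro ω hω
        simp only [Set.mem_setOf_eq] at hω ⊢
        have h1 : (∑ i ∈ Finset.Icc 1 n, X i) ω ≤ M := by
          simpa using hω n
        rw [hμeq, abs_sub_comm]
        rw [abs_of_nonneg (by linarith)]
        linarith
      calc P A ≤ _ := measure_mono hsub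
        _ ≤ ENNReal.ofReal (ProbabilityTheory.variance (∑ i ∈ Finset.Icc 1 n, X i) P / ((k : ℝ) + 1) ^ 2) :=
            ProbabilityTheory.meas_ge_le_variance_div_sq (memLp_finset_sum' _ (fun i _ => hL2 i))
              (by positivity)
        _ ≤ ENNReal.ofReal (V / ((k : ℝ) + 1) ^ 2) := by
            apply ENNReal.ofReal_le_ofReal
            apply div_le_div_of_nonneg_right (hvarS n)
            positivity
    have hlim : Tendsto (fun k : ℕ => ENNReal.ofReal (V / ((k : ℝ) + 1) ^ 2)) atTop (nhds 0) := by
      rw [show (0 : ENNReal) = ENNReal.ofReal 0 by simp]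
      apply ENNReal.tendsto_ofReal
      have : Tendsto (fun k : ℕ => ((k : ℝ) + 1) ^ 2) atTop atTop := by
        apply tendsto_atTop_mono (fun k : ℕ => ?_) tendsto_natCast_atTop_atTop
        nlinarith [Nat.cast_nonneg (α := ℝ) k]
      simpa using Tendsto.div_atTop tendsto_const_nhds this
    have : P A ≤ 0 := ge_of_tendsto' hlim key
    simpa [hA] using le_antisymm this zero_le
  filter_upwards [hae] with ω hω
  apply tendsto_atTop_atTop_of_monotone
  · intro p q hpq
    exact Finset.sum_le_sum_of_subset_of_nonneg (Finset.Icc_subset_Icc_right hpq)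
      (fun i _ _ => hnonneg i ω)
  · intro L
    obtain ⟨n, hn⟩ := hω ⌈L⌉₊
    exact ⟨n, (Nat.le_ceil L).trans hn.le⟩
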